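/- Let m ≥ 2 be an integer and let f₁, f₂ : ℝ² → ℝ be continuously differentiable functions satisfying: (i) for every x with f₁(x) = 0 and f₂(x) ≥ 0, Df₁(x) ≠ 0; (ii) for every x with f₂(x) = 0 and f₁(x) ≥ 0, Df₂(x) ≠ 0; (iii) for every x with f₁(x) = 0 and f₂(x) = 0, the functionals Df₁(x) and Df₂(x) are linearly independent. Define e : ℝ² × ℝ × ℝ^{m−1} → ℝ² by e(x, y₁, y') = (f₁(x) − y₁², f₂(x) − ‖y'‖²). Then at every point p with e(p) = (0,0), the derivative De(p) : ℝ^{m+2} → ℝ² is surjective (has rank 2); hence (0,0) is a regular value of e and e⁻¹(0,0) is a smooth m-dimensional submanifold of ℝ^{m+2}. -/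

import Mathlib

open ContinuousLinearMap

lemma clm_eval (g : ℝ × ℝ →L[ℝ] ℝ) (v : ℝ × ℝ) :
    g v = v.1 * g (1, 0) + v.2 * g (0, 1) := by
  have h : v = v.1 • ((1:ℝ), (0:ℝ)) + v.2 • ((0:ℝ), (1:ℝ)) := by
    simp [Prod.ext_iff]
  conv_lhs => rw [h]
  rw [map_add, map_smul, map_smul, smul_eq_mul, smul_eq_mul]

lemma single_surj (g : ℝ × ℝ →L[ℝ] ℝ) (hg : g ≠ 0) (t : ℝ) : ∃ u, g u = t := by
  have h : ∃ u₀, g u₀ ≠ 0 := by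
    by_contra h
    push_neg at h
    exact hg (ContinuousLinearMap.ext fun v => by simp [h v])
  obtain ⟨u₀, hu₀⟩ := h
  exact ⟨(t / g u₀) • u₀, by rw [map_smul, smul_eq_mul, div_mul_cancel₀ t hu₀]⟩

lemma pair_surj (g₁ g₂ : ℝ × ℝ →L[ℝ] ℝ)
    (h : LinearIndependent ℝ ![g₁, g₂]) (r s : ℝ) :
    ∃ u, g₁ u = r ∧ g₂ u = s := by
  rw [linearIndependent_fin2] at h
  simp only [Matrix.cons_val_one, Matrix.head_cons, Matrix.cons_val_zero] at h
  obtain ⟨hg₂, hno⟩ := h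
  set a := g₁ (1,0) with ha
  set b := g₁ (0,1) with hb
  set c := g₂ (1,0) with hc
  set d := g₂ (0,1) with hd
  have hdet : a * d - b * c ≠ 0 := by
    intro h0
    by_cases hcz : c = 0
    · by_cases hdz : d = 0
      · exact hg₂ (ContinuousLinearMap.ext fun v => by
          rw [clm_eval g₂ v, ← hc, ← hd, hcz, hdz]; simp)
      · refine hno (b / d) (ContinuousLinearMap.ext fun v => ?_)
        rw [ContinuousLinearMap.smul_apply, clm_eval g₂ v, clm_eval g₁ v,
          ← ha, ← hb, ← hc, ← hd, hcz]
        have haz : a = 0 := by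
          have := h0; rw [hcz, mul_zero, sub_zero] at this; exact (mul_eq_zero.mp this).resolve_right hdz
        rw [haz]
        rw [smul_eq_mul, div_mul_eq_mul_div, div_eq_iff hdz]
        ring
    · refine hno (a / c) (ContinuousLinearMap.ext fun v => ?_)
      rw [ContinuousLinearMap.smul_apply, clm_eval g₂ v, clm_eval g₁ v,
        ← ha, ← hb, ← hc, ← hd]
      have hbd : b = a * d / c := by
        field_simp
        linarith [h0]
      rw [hbd]
      rw [smul_eq_mul, div_mul_eq_mul_div, div_eq_iff hcz, add_mul, mul_assoc (v.2), div_mul_cancel₀ _ hcz]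
      ring
  refine ⟨((d * r - b * s) / (a * d - b * c), (a * s - c * r) / (a * d - b * c)), ?_, ?_⟩
  · rw [clm_eval g₁, ← ha, ← hb]; rw [div_mul_eq_mul_div, div_mul_eq_mul_div, ← add_div, div_eq_iff hdet]; ring
  · rw [clm_eval g₂, ← hc, ← hd]; rw [div_mul_eq_mul_div, div_mul_eq_mul_div, ← add_div, div_eq_iff hdet]; ring

set_option maxHeartbeats 1000000 in
/-- Let `f₁, f₂ : ℝ² → ℝ` be `C¹` with: `Df₁ ≠ 0` on `{f₁ = 0, f₂ ≥ 0}`, `Df₂ ≠ 0` on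
`{f₂ = 0, f₁ ≥ 0}`, and `Df₁, Df₂` linearly independent on `{f₁ = 0, f₂ = 0}`. Then the
map `e(x, y₁, y') = (f₁(x) − y₁², f₂(x) − ‖y'‖²)` on `ℝ² × ℝ × ℝ^{m−1}` has surjective
derivative (rank 2) at every point of `e⁻¹(0,0)`; hence `(0,0)` is a regular value of `e`. -/
theorem rank_two_at_zero_set (m : ℕ) (hm : 2 ≤ m)
    (f₁ f₂ : ℝ × ℝ → ℝ) (hf₁ : ContDiff ℝ 1 f₁) (hf₂ : ContDiff ℝ 1 f₂)
    (h₁ : ∀ x, f₁ x = 0 → 0 ≤ f₂ x → fderiv ℝ f₁ x ≠ 0)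
    (h₂ : ∀ x, f₂ x = 0 → 0 ≤ f₁ x → fderiv ℝ f₂ x ≠ 0)
    (h₁₂ : ∀ x, f₁ x = 0 → f₂ x = 0 →
      LinearIndependent ℝ ![fderiv ℝ f₁ x, fderiv ℝ f₂ x])
    (e : (ℝ × ℝ) × ℝ × EuclideanSpace ℝ (Fin (m - 1)) → ℝ × ℝ)
    (he : e = fun p => (f₁ p.1 - p.2.1 ^ 2, f₂ p.1 - ‖p.2.2‖ ^ 2)) :
    ∀ p, e p = (0, 0) → Function.Surjective (fderiv ℝ e p) := by
  subst he
  rintro ⟨x, y₁, y'⟩ hp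
  simp only [Prod.mk.injEq] at hp
  obtain ⟨hp1, hp2⟩ := hp
  have hp1' : f₁ x = y₁ ^ 2 := by linarith
  have hp2' : f₂ x = ‖y'‖ ^ 2 := by linarith
  have h1 : HasFDerivAt (fun q : (ℝ × ℝ) × ℝ × EuclideanSpace ℝ (Fin (m - 1)) => f₁ q.1)
      ((fderiv ℝ f₁ x).comp (fst ℝ (ℝ × ℝ) (ℝ × EuclideanSpace ℝ (Fin (m - 1))))) (x, y₁, y') :=
    ((hf₁.differentiable one_ne_zero x).hasFDerivAt).comp (x, y₁, y') hasFDerivAt_fst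
  have h2 : HasFDerivAt (fun q : (ℝ × ℝ) × ℝ × EuclideanSpace ℝ (Fin (m - 1)) => f₂ q.1)
      ((fderiv ℝ f₂ x).comp (fst ℝ (ℝ × ℝ) (ℝ × EuclideanSpace ℝ (Fin (m - 1))))) (x, y₁, y') :=
    ((hf₂.differentiable one_ne_zero x).hasFDerivAt).comp (x, y₁, y') hasFDerivAt_fst
  have hv : HasFDerivAt (fun q : (ℝ × ℝ) × ℝ × EuclideanSpace ℝ (Fin (m - 1)) => q.2.1)
      ((fst ℝ ℝ (EuclideanSpace ℝ (Fin (m - 1)))).comp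
        (snd ℝ (ℝ × ℝ) (ℝ × EuclideanSpace ℝ (Fin (m - 1))))) (x, y₁, y') :=
    hasFDerivAt_snd.fst
  have hy1 : HasFDerivAt
      (fun q : (ℝ × ℝ) × ℝ × EuclideanSpace ℝ (Fin (m - 1)) => q.2.1 ^ 2)
      (y₁ • ((fst ℝ ℝ (EuclideanSpace ℝ (Fin (m - 1)))).comp
          (snd ℝ (ℝ × ℝ) (ℝ × EuclideanSpace ℝ (Fin (m - 1))))) +
        y₁ • ((fst ℝ ℝ (EuclideanSpace ℝ (Fin (m - 1)))).comp
          (snd ℝ (ℝ × ℝ) (ℝ × EuclideanSpace ℝ (Fin (m - 1)))))) (x, y₁, y') := by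
    simp only [pow_two]
    exact hv.mul hv
  have hy2 := (hasFDerivAt_snd
    (p := ((x, y₁, y') : (ℝ × ℝ) × ℝ × EuclideanSpace ℝ (Fin (m - 1))))).snd.norm_sq
  have hL := HasFDerivAt.prodMk (HasFDerivAt.sub h1 hy1) (HasFDerivAt.sub h2 hy2)
  have hfd : fderiv ℝ (fun q : (ℝ × ℝ) × ℝ × EuclideanSpace ℝ (Fin (m - 1)) =>
      (f₁ q.1 - q.2.1 ^ 2, f₂ q.1 - ‖q.2.2‖ ^ 2)) (x, y₁, y') = _ := hL.fderiv
  have key : ∀ (u : ℝ × ℝ) (v : ℝ) (w : EuclideanSpace ℝ (Fin (m - 1))),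
      (fderiv ℝ (fun q : (ℝ × ℝ) × ℝ × EuclideanSpace ℝ (Fin (m - 1)) =>
        (f₁ q.1 - q.2.1 ^ 2, f₂ q.1 - ‖q.2.2‖ ^ 2)) (x, y₁, y')) (u, v, w) =
      (fderiv ℝ f₁ x u - 2 * y₁ * v, fderiv ℝ f₂ x u - 2 * (inner ℝ y' w : ℝ)) := by
    intro u v w
    rw [hfd]
    simp only [ContinuousLinearMap.prod_apply, ContinuousLinearMap.sub_apply,
      ContinuousLinearMap.add_apply, ContinuousLinearMap.comp_apply,
      ContinuousLinearMap.smul_apply, ContinuousLinearMap.coe_fst',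
      ContinuousLinearMap.coe_snd', innerSL_apply_apply, smul_eq_mul,
      Prod.mk.injEq, nsmul_eq_mul]
    constructor <;> ring
  rintro ⟨a, b⟩
  by_cases hy : y₁ = 0
  · by_cases hw : y' = 0
    · have hf1z : f₁ x = 0 := by rw [hp1', hy]; ring
      have hf2z : f₂ x = 0 := by rw [hp2', hw]; simp
      obtain ⟨u, hu1, hu2⟩ := pair_surj _ _ (h₁₂ x hf1z hf2z) a b
      exact ⟨(u, 0, 0), by rw [key]; simp [hu1, hu2]⟩
    · have hf1z : f₁ x = 0 := by rw [hp1', hy]; ring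
      have hf2nn : 0 ≤ f₂ x := by rw [hp2']; positivity
      obtain ⟨u, hu⟩ := single_surj _ (h₁ x hf1z hf2nn) a
      have hn : ‖y'‖ ^ 2 ≠ 0 := pow_ne_zero _ (norm_ne_zero_iff.mpr hw)
      refine ⟨(u, 0, ((fderiv ℝ f₂ x u - b) / (2 * ‖y'‖ ^ 2)) • y'), ?_⟩
      rw [key, hu]
      simp only [real_inner_smul_right, real_inner_self_eq_norm_sq]
      refine Prod.ext ?_ ?_
      · simp
      · simp only [Prod.snd]
        field_simp
        try ring
  · by_cases hw : y' = 0
    · have hf2z : f₂ x = 0 := by rw [hp2', hw]; simp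
      have hf1nn : 0 ≤ f₁ x := by rw [hp1']; positivity
      obtain ⟨u, hu⟩ := single_surj _ (h₂ x hf2z hf1nn) b
      refine ⟨(u, (fderiv ℝ f₁ x u - a) / (2 * y₁), 0), ?_⟩
      rw [key, hu]
      refine Prod.ext ?_ ?_
      · field_simp
        try ring
      · simp
    · have hn : ‖y'‖ ^ 2 ≠ 0 := pow_ne_zero _ (norm_ne_zero_iff.mpr hw)
      refine ⟨(0, -a / (2 * y₁), (-b / (2 * ‖y'‖ ^ 2)) • y'), ?_⟩
      rw [key]
      simp only [map_zero, real_inner_smul_right, real_inner_self_eq_norm_sq]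
      refine Prod.ext ?_ ?_
      · field_simp
        try ring
      · field_simp
        try ring
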